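/- Fix λ > 0, γ > 0, α > 0 and p a probability distribution on ℝ^d with bounded support, and let W* be the unique positive definite solution of E_{x∼p}[(W x xᵀ W)/(1 + γ‖W x‖)] + λW = I. Then for every θ ∈ ℝ^d: E_{x∼p}[ min{⟨x,θ⟩², α·|⟨x,θ⟩|} ] ≤ ‖(W*)⁻¹ θ‖² + α·√d·γ·‖(W*)⁻¹ θ‖. -/

import Mathlib

open MeasureTheory Matrix
open scoped Classical

/-- Euclidean norm on `Fin d → ℝ`. -/
noncomputable def enorm' {d : ℕ} (v : Fin d → ℝ) : ℝ := Real.sqrt (∑ i, (v i)^2)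

/-- Euclidean inner product on `Fin d → ℝ`. -/
noncomputable def einner' {d : ℕ} (v w : Fin d → ℝ) : ℝ := ∑ i, v i * w i

/-- Operator (spectral) norm of a real matrix. -/
noncomputable def opNorm {d : ℕ} (M : Matrix (Fin d) (Fin d) ℝ) : ℝ :=
  ‖(Matrix.toEuclideanCLM (𝕜 := ℝ) M :
      EuclideanSpace ℝ (Fin d) →L[ℝ] EuclideanSpace ℝ (Fin d))‖

/-- Positive semidefinite square root (junk value `0` on non-PSD matrices). -/
noncomputable def psqrt {d : ℕ} (A : Matrix (Fin d) (Fin d) ℝ) : Matrix (Fin d) (Fin d) ℝ :=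
  if h : A.PosSemidef then (h.1.eigenvectorUnitary : Matrix (Fin d) (Fin d) ℝ) *
    diagonal ((↑) ∘ (√·) ∘ h.1.eigenvalues) * (star h.1.eigenvectorUnitary : Matrix (Fin d) (Fin d) ℝ)
  else 0

/-- Entrywise expectation of a matrix-valued function. -/
noncomputable def mExp {d : ℕ} (p : Measure (Fin d → ℝ))
    (f : (Fin d → ℝ) → Matrix (Fin d) (Fin d) ℝ) : Matrix (Fin d) (Fin d) ℝ :=
  Matrix.of fun i j => ∫ x, f x i j ∂p

/-- The LDP operator `F(U) = E[(U x xᵀ U)/‖U x‖ · 1{x ≠ 0}] + λ U`. -/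
noncomputable def FLDP {d : ℕ} (p : Measure (Fin d → ℝ)) (lam : ℝ)
    (U : Matrix (Fin d) (Fin d) ℝ) : Matrix (Fin d) (Fin d) ℝ :=
  mExp p (fun x => if x = 0 then 0
    else (enorm' (U.mulVec x))⁻¹ • vecMulVec (U.mulVec x) (U.mulVec x)) + lam • U

/-- The DP operator `G(W) = E[(W x xᵀ W)/(1 + γ‖W x‖)] + λ W`. -/
noncomputable def FJDP {d : ℕ} (p : Measure (Fin d → ℝ)) (γ lam : ℝ)
    (W : Matrix (Fin d) (Fin d) ℝ) : Matrix (Fin d) (Fin d) ℝ :=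
  mExp p (fun x => (1 + γ * enorm' (W.mulVec x))⁻¹ • vecMulVec (W.mulVec x) (W.mulVec x))
    + lam • W

/-- `sym(A) = (Aᵀ A)^{1/2}`. -/
noncomputable def symMat {d : ℕ} (A : Matrix (Fin d) (Fin d) ℝ) : Matrix (Fin d) (Fin d) ℝ :=
  psqrt (Aᵀ * A)

/-- Smallest eigenvalue of a Hermitian matrix (junk value `0` otherwise). -/
noncomputable def lmin {d : ℕ} (A : Matrix (Fin d) (Fin d) ℝ) : ℝ :=
  if h : A.IsHermitian then ⨅ i, h.eigenvalues i else 0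

/-- Largest eigenvalue of a Hermitian matrix (junk value `0` otherwise). -/
noncomputable def lmax {d : ℕ} (A : Matrix (Fin d) (Fin d) ℝ) : ℝ :=
  if h : A.IsHermitian then ⨆ i, h.eigenvalues i else 0

lemma enorm'_nonneg {d : ℕ} (v : Fin d → ℝ) : 0 ≤ enorm' v := Real.sqrt_nonneg _

lemma enorm'_sq {d : ℕ} (v : Fin d → ℝ) : enorm' v ^ 2 = ∑ i, (v i)^2 :=
  Real.sq_sqrt (Finset.sum_nonneg fun _ _ => sq_nonneg _)

lemma abs_le_enorm' {d : ℕ} (v : Fin d → ℝ) (i : Fin d) : |v i| ≤ enorm' v := by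
  rw [← Real.sqrt_sq_eq_abs]
  exact Real.sqrt_le_sqrt (Finset.single_le_sum (f := fun j => (v j)^2)
    (fun j _ => sq_nonneg _) (Finset.mem_univ i))

lemma continuous_enorm' {d : ℕ} : Continuous (enorm' (d := d)) := by
  unfold enorm'
  exact Real.continuous_sqrt.comp (continuous_finset_sum _ fun i _ => by fun_prop)

set_option maxHeartbeats 2000000 in
theorem aux9 {d : ℕ} (p : Measure (Fin d → ℝ)) [IsProbabilityMeasure p]
    (y : (Fin d → ℝ) → Fin d → ℝ) (hy : Continuous y)
    (γ lam α : ℝ) (hγ : 0 < γ) (hlam : 0 < lam) (hα : 0 < α)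
    (u : Fin d → ℝ)
    (W : Matrix (Fin d) (Fin d) ℝ)
    (hQ : 0 ≤ ∑ i, ∑ j, u i * W i j * u j)
    (hTr : 0 ≤ ∑ i, W i i)
    (C : ℝ) (hC : ∀ᵐ x ∂p, enorm' (y x) ≤ C)
    (hfixe : ∀ i j, (∫ x, (1 + γ * enorm' (y x))⁻¹ * (y x i * y x j) ∂p)
        = (if i = j then (1:ℝ) else 0) - lam * W i j) :
    (∫ x, min ((∑ j, y x j * u j)^2) (α * |∑ j, y x j * u j|) ∂p)
      ≤ enorm' u ^ 2 + α * Real.sqrt d * γ * enorm' u := by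
  -- degenerate case
  by_cases hnu : enorm' u = 0
  · have hu0 : ∀ j, u j = 0 := by
      intro j
      have h0 : (∑ i, (u i)^2) = 0 := by
        have := hnu
        unfold enorm' at this
        exact (Real.sqrt_eq_zero (Finset.sum_nonneg fun _ _ => sq_nonneg _)).1 this
      have := (Finset.sum_eq_zero_iff_of_nonneg (fun i _ => sq_nonneg (u i))).1 h0 j
        (Finset.mem_univ j)
      exact pow_eq_zero_iff (two_ne_zero) |>.1 this
    have hz : ∀ x, (∑ j, y x j * u j) = 0 := fun x =>
      Finset.sum_eq_zero fun j _ => by rw [hu0 j, mul_zero]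
    simp [hz, hnu]
  -- nondegenerate
  have nupos : 0 < enorm' u := lt_of_le_of_ne (enorm'_nonneg u) (Ne.symm hnu)
  have hd : 0 < (d:ℝ) := by
    have hd0 : d ≠ 0 := by
      rintro rfl
      exact hnu (by simp [enorm'])
    exact_mod_cast Nat.pos_of_ne_zero hd0
  have hden : ∀ x, 0 < 1 + γ * enorm' (y x) := fun x => by
    nlinarith [enorm'_nonneg (y x)]
  have hcpos : ∀ x, 0 < (1 + γ * enorm' (y x))⁻¹ := fun x => inv_pos.2 (hden x)
  have hcle : ∀ x, (1 + γ * enorm' (y x))⁻¹ ≤ 1 := fun x => by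
    rw [inv_le_one_iff₀]
    right
    nlinarith [enorm'_nonneg (y x)]
  have hC0 : 0 ≤ C := by
    have hne : (ae p).NeBot := ae_neBot.2 (IsProbabilityMeasure.ne_zero p)
    obtain ⟨x, hx⟩ := hC.exists
    exact le_trans (enorm'_nonneg (y x)) hx
  set U : ℝ := ∑ j, |u j| with hU
  have hU0 : 0 ≤ U := Finset.sum_nonneg fun _ _ => abs_nonneg _
  have htb : ∀ x, |∑ j, y x j * u j| ≤ enorm' (y x) * U := by
    intro x
    calc |∑ j, y x j * u j| ≤ ∑ j, |y x j * u j| := Finset.abs_sum_le_sum_abs _ _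
    _ = ∑ j, |y x j| * |u j| := by simp [abs_mul]
    _ ≤ ∑ j, enorm' (y x) * |u j| := Finset.sum_le_sum fun j _ =>
        mul_le_mul_of_nonneg_right (abs_le_enorm' _ j) (abs_nonneg _)
    _ = enorm' (y x) * U := by rw [Finset.mul_sum]
  -- continuity
  have hcc : Continuous fun x => (1 + γ * enorm' (y x))⁻¹ := by
    apply Continuous.inv₀
    · exact continuous_const.add (continuous_const.mul (continuous_enorm'.comp hy))
    · exact fun x => (hden x).ne'
  have htc : Continuous fun x => ∑ j, y x j * u j :=
    continuous_finset_sum _ fun j _ => ((continuous_apply j).comp hy).mul continuous_const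
  -- integrability
  have key : ∀ (g : (Fin d → ℝ) → ℝ) (B : ℝ), Continuous g → (∀ᵐ x ∂p, |g x| ≤ B) →
      Integrable g p :=
    fun g B hg hB => (integrable_const B).mono' hg.aestronglyMeasurable (by simpa using hB)
  have hg1 : ∀ i j, Integrable (fun x => (1 + γ * enorm' (y x))⁻¹ * (y x i * y x j)) p := by
    intro i j
    refine key _ (C*C) (hcc.mul (((continuous_apply i).comp hy).mul
      ((continuous_apply j).comp hy))) ?_
    filter_upwards [hC] with x hx
    have h1 : |y x i| ≤ C := (abs_le_enorm' (y x) i).trans hx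
    have h2 : |y x j| ≤ C := (abs_le_enorm' (y x) j).trans hx
    rw [abs_mul, abs_mul, abs_of_pos (hcpos x)]
    have h3 : |y x i| * |y x j| ≤ C * C := mul_le_mul h1 h2 (abs_nonneg _) hC0
    nlinarith [hcpos x, hcle x, abs_nonneg (y x i), abs_nonneg (y x j)]
  have hg2 : Integrable (fun x => (1 + γ * enorm' (y x))⁻¹ * (∑ j, y x j * u j)^2) p := by
    refine key _ ((C*U)^2) (hcc.mul (htc.pow 2)) ?_
    filter_upwards [hC] with x hx
    have h1 : |∑ j, y x j * u j| ≤ C * U :=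
      (htb x).trans (mul_le_mul_of_nonneg_right hx hU0)
    rw [abs_mul, abs_of_pos (hcpos x), abs_pow]
    have h2 : |∑ j, y x j * u j|^2 ≤ (C*U)^2 := pow_le_pow_left₀ (abs_nonneg _) h1 2
    nlinarith [hcpos x, hcle x, sq_nonneg (|∑ j, y x j * u j|)]
  have hg3 : Integrable (fun x => (1 + γ * enorm' (y x))⁻¹ * enorm' (y x)^2) p := by
    refine key _ (C^2) (hcc.mul ((continuous_enorm'.comp hy).pow 2)) ?_
    filter_upwards [hC] with x hx
    rw [abs_mul, abs_of_pos (hcpos x), abs_pow, abs_of_nonneg (enorm'_nonneg (y x))]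
    have h2 : enorm' (y x)^2 ≤ C^2 := pow_le_pow_left₀ (enorm'_nonneg _) hx 2
    nlinarith [hcpos x, hcle x, sq_nonneg (enorm' (y x))]
  have hg4 : Integrable (fun x =>
      (1 + γ * enorm' (y x))⁻¹ * (enorm' (y x) * |∑ j, y x j * u j|)) p := by
    refine key _ (C*(C*U)) (hcc.mul ((continuous_enorm'.comp hy).mul htc.abs)) ?_
    filter_upwards [hC] with x hx
    have h1 : |∑ j, y x j * u j| ≤ C * U :=
      (htb x).trans (mul_le_mul_of_nonneg_right hx hU0)
    rw [abs_mul, abs_of_pos (hcpos x), abs_mul, abs_of_nonneg (enorm'_nonneg (y x)), abs_abs]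
    have h2 : enorm' (y x) * |∑ j, y x j * u j| ≤ C * (C*U) :=
      mul_le_mul hx h1 (abs_nonneg _) hC0
    nlinarith [hcpos x, hcle x, mul_nonneg (enorm'_nonneg (y x)) (abs_nonneg (∑ j, y x j * u j))]
  -- A computation
  have hAswap : (∫ x, (1 + γ * enorm' (y x))⁻¹ * (∑ j, y x j * u j)^2 ∂p)
      = ∑ i, ∑ j, u i * u j * ∫ x, (1 + γ * enorm' (y x))⁻¹ * (y x i * y x j) ∂p := by
    have hpw : ∀ x, (1 + γ * enorm' (y x))⁻¹ * (∑ j, y x j * u j)^2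
        = ∑ i, ∑ j, u i * u j * ((1 + γ * enorm' (y x))⁻¹ * (y x i * y x j)) := by
      intro x
      rw [sq, Finset.sum_mul_sum, Finset.mul_sum]
      refine Finset.sum_congr rfl fun i _ => ?_
      rw [Finset.mul_sum]
      exact Finset.sum_congr rfl fun j _ => by ring
    simp_rw [hpw]
    rw [integral_finset_sum _ (fun i _ => integrable_finset_sum _
      (fun j _ => ((hg1 i j).const_mul _)))]
    refine Finset.sum_congr rfl fun i _ => ?_
    rw [integral_finset_sum _ (fun j _ => (hg1 i j).const_mul _)]
    exact Finset.sum_congr rfl fun j _ => integral_const_mul _ _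
  have hA_le : (∫ x, (1 + γ * enorm' (y x))⁻¹ * (∑ j, y x j * u j)^2 ∂p)
      ≤ enorm' u ^ 2 := by
    rw [hAswap]
    simp_rw [hfixe]
    rw [enorm'_sq]
    have key2 : ∑ i, ∑ j, u i * u j * ((if i = j then (1:ℝ) else 0) - lam * W i j)
        = (∑ i, (u i)^2) - lam * (∑ i, ∑ j, u i * W i j * u j) := by
      rw [Finset.mul_sum, ← Finset.sum_sub_distrib]
      refine Finset.sum_congr rfl fun i _ => ?_
      simp only [mul_sub]
      rw [Finset.sum_sub_distrib]
      congr 1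
      · simp [mul_ite, Finset.sum_ite_eq, sq]
      · rw [Finset.mul_sum]
        exact Finset.sum_congr rfl fun j _ => by ring
    rw [key2]
    nlinarith [mul_nonneg hlam.le hQ]
  -- B computation
  have hBswap : (∫ x, (1 + γ * enorm' (y x))⁻¹ * enorm' (y x)^2 ∂p)
      = ∑ i, ∫ x, (1 + γ * enorm' (y x))⁻¹ * (y x i * y x i) ∂p := by
    have hpw : ∀ x, (1 + γ * enorm' (y x))⁻¹ * enorm' (y x)^2
        = ∑ i, (1 + γ * enorm' (y x))⁻¹ * (y x i * y x i) := by
      intro x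
      rw [enorm'_sq, Finset.mul_sum]
      exact Finset.sum_congr rfl fun i _ => by ring
    simp_rw [hpw]
    exact integral_finset_sum _ fun i _ => hg1 i i
  have hB_le : (∫ x, (1 + γ * enorm' (y x))⁻¹ * enorm' (y x)^2 ∂p) ≤ (d:ℝ) := by
    rw [hBswap]
    simp_rw [hfixe]
    simp only [eq_self_iff_true, if_true]
    have key3 : ∑ i : Fin d, ((1:ℝ) - lam * W i i) = (d:ℝ) - lam * ∑ i, W i i := by
      rw [Finset.sum_sub_distrib, ← Finset.mul_sum]
      simp [Finset.card_univ]
    rw [key3]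
    nlinarith [mul_nonneg hlam.le hTr]
  -- Cauchy-Schwarz via epsilon
  set ε : ℝ := Real.sqrt d / enorm' u with hεdef
  have hε : 0 < ε := div_pos (Real.sqrt_pos.2 hd) nupos
  have hpt : ∀ x, 2*ε*((1 + γ * enorm' (y x))⁻¹ * (enorm' (y x) * |∑ j, y x j * u j|))
      ≤ ε^2 * ((1 + γ * enorm' (y x))⁻¹ * (∑ j, y x j * u j)^2)
        + (1 + γ * enorm' (y x))⁻¹ * enorm' (y x)^2 := by
    intro x
    rcases abs_cases (∑ j, y x j * u j) with ⟨h1, _⟩ | ⟨h1, _⟩ <;> rw [h1] <;>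
      nlinarith [mul_nonneg (hcpos x).le (sq_nonneg (ε * (∑ j, y x j * u j) - enorm' (y x))),
        mul_nonneg (hcpos x).le (sq_nonneg (ε * (∑ j, y x j * u j) + enorm' (y x)))]
  have hmono := integral_mono (hg4.const_mul (2*ε)) ((hg2.const_mul (ε^2)).add hg3) hpt
  simp only [Pi.add_apply] at hmono
  rw [integral_const_mul, integral_add (hg2.const_mul _) hg3, integral_const_mul] at hmono
  have hεsq : ε^2 * enorm' u ^ 2 = (d:ℝ) := by
    rw [hεdef, div_pow, Real.sq_sqrt hd.le]
    field_simp
  have hDle : (∫ x, (1 + γ * enorm' (y x))⁻¹ * (enorm' (y x) * |∑ j, y x j * u j|) ∂p)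
      ≤ Real.sqrt d * enorm' u := by
    have h2d : 2 * ε * (∫ x, (1 + γ * enorm' (y x))⁻¹
        * (enorm' (y x) * |∑ j, y x j * u j|) ∂p) ≤ 2 * (d:ℝ) := by
      have := mul_le_mul_of_nonneg_left hA_le (sq_nonneg ε)
      nlinarith [hmono, hB_le]
    have hεnu : ε * (Real.sqrt d * enorm' u) = (d:ℝ) := by
      have heq : ε * (Real.sqrt d * enorm' u)
          = Real.sqrt d * Real.sqrt d * (enorm' u / enorm' u) := by
        rw [hεdef]; ring
      rw [heq, div_self nupos.ne', mul_one, Real.mul_self_sqrt hd.le]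
    nlinarith [hε]
  -- final
  have hminpt : ∀ x, min ((∑ j, y x j * u j)^2) (α * |∑ j, y x j * u j|)
      ≤ (1 + γ * enorm' (y x))⁻¹ * (∑ j, y x j * u j)^2
        + (α*γ) * ((1 + γ * enorm' (y x))⁻¹ * (enorm' (y x) * |∑ j, y x j * u j|)) := by
    intro x
    have hcm : (1 + γ * enorm' (y x))⁻¹ * (1 + γ * enorm' (y x)) = 1 :=
      inv_mul_cancel₀ (hden x).ne'
    have h1 := min_le_left ((∑ j, y x j * u j)^2) (α * |∑ j, y x j * u j|)
    have h2 := min_le_right ((∑ j, y x j * u j)^2) (α * |∑ j, y x j * u j|)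
    have h3 : (1 + γ * enorm' (y x))⁻¹ * (1 + γ * enorm' (y x))
        * min ((∑ j, y x j * u j)^2) (α * |∑ j, y x j * u j|)
        = min ((∑ j, y x j * u j)^2) (α * |∑ j, y x j * u j|) := by
      rw [hcm, one_mul]
    nlinarith [mul_le_mul_of_nonneg_left h1 (hcpos x).le,
      mul_le_mul_of_nonneg_left h2
        (mul_nonneg (hcpos x).le (mul_nonneg hγ.le (enorm'_nonneg (y x)))), h3]
  calc (∫ x, min ((∑ j, y x j * u j)^2) (α * |∑ j, y x j * u j|) ∂p)
      ≤ ∫ x, ((1 + γ * enorm' (y x))⁻¹ * (∑ j, y x j * u j)^2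
        + (α*γ) * ((1 + γ * enorm' (y x))⁻¹ * (enorm' (y x) * |∑ j, y x j * u j|))) ∂p := by
        refine integral_mono_of_nonneg (ae_of_all _ fun x => ?_)
          (hg2.add (hg4.const_mul (α*γ))) (ae_of_all _ hminpt)
        exact le_min (sq_nonneg _) (mul_nonneg hα.le (abs_nonneg _))
    _ = (∫ x, (1 + γ * enorm' (y x))⁻¹ * (∑ j, y x j * u j)^2 ∂p)
        + (α*γ) * ∫ x, (1 + γ * enorm' (y x))⁻¹
            * (enorm' (y x) * |∑ j, y x j * u j|) ∂p := by
        rw [integral_add hg2 (hg4.const_mul _), integral_const_mul]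
    _ ≤ enorm' u ^ 2 + α * Real.sqrt d * γ * enorm' u := by
        nlinarith [hA_le, mul_le_mul_of_nonneg_left hDle (mul_nonneg hα.le hγ.le)]

/-- For the solution `W*` of `FJDP(W) = I`,
`E[min{⟨x,θ⟩², α|⟨x,θ⟩|}] ≤ ‖(W*)⁻¹θ‖² + α√d·γ·‖(W*)⁻¹θ‖`. -/
theorem stmt9 {d : ℕ} (p : Measure (Fin d → ℝ)) [IsProbabilityMeasure p]
    (hbdd : ∃ R : ℝ, ∀ᵐ x ∂p, enorm' x ≤ R)
    (lam γ α : ℝ) (hlam : 0 < lam) (hγ : 0 < γ) (hα : 0 < α)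
    (Wstar : Matrix (Fin d) (Fin d) ℝ) (hWpd : Wstar.PosDef)
    (hfix : FJDP p γ lam Wstar = 1)
    (huniq : ∀ W : Matrix (Fin d) (Fin d) ℝ, W.PosDef → FJDP p γ lam W = 1 → W = Wstar)
    (θ : Fin d → ℝ) :
    (∫ x, min ((einner' x θ)^2) (α * |einner' x θ|) ∂p)
      ≤ enorm' (Wstar⁻¹.mulVec θ)^2
        + α * Real.sqrt d * γ * enorm' (Wstar⁻¹.mulVec θ) := by
  have hdet : IsUnit Wstar.det := isUnit_iff_ne_zero.2 hWpd.det_pos.ne'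
  set u := Wstar⁻¹.mulVec θ with hu
  have hθ : Wstar.mulVec u = θ := by
    rw [hu, mulVec_mulVec, mul_nonsing_inv _ hdet, one_mulVec]
  have hsym : ∀ i j, Wstar j i = Wstar i j := fun i j => by
    simpa using congrFun (congrFun hWpd.1 i) j
  have ht : ∀ x, einner' x θ = ∑ j, Wstar.mulVec x j * u j := by
    intro x
    conv_lhs => rw [← hθ]
    simp only [einner', mulVec, dotProduct, Finset.mul_sum, Finset.sum_mul]
    rw [Finset.sum_comm]
    refine Finset.sum_congr rfl fun j _ => Finset.sum_congr rfl fun i _ => ?_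
    rw [hsym i j]
    ring
  have hfixe : ∀ i j, (∫ x, (1 + γ * enorm' (Wstar.mulVec x))⁻¹
      * (Wstar.mulVec x i * Wstar.mulVec x j) ∂p)
      = (if i = j then (1:ℝ) else 0) - lam * Wstar i j := by
    intro i j
    have h := congrFun (congrFun hfix i) j
    simp only [FJDP, mExp, Matrix.add_apply, Matrix.smul_apply, Matrix.of_apply,
      vecMulVec_apply, smul_eq_mul, Matrix.one_apply] at h
    linarith
  have hQ : 0 ≤ ∑ i, ∑ j, u i * Wstar i j * u j := by
    have h := hWpd.posSemidef.dotProduct_mulVec_nonneg u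
    simp only [star_trivial, dotProduct, mulVec] at h
    calc (0:ℝ) ≤ ∑ i, u i * ∑ j, Wstar i j * u j := h
    _ = _ := by
      refine Finset.sum_congr rfl fun i _ => ?_
      rw [Finset.mul_sum]
      exact Finset.sum_congr rfl fun j _ => (mul_assoc _ _ _).symm
  have hTr : 0 ≤ ∑ i, Wstar i i := by
    refine Finset.sum_nonneg fun i _ => ?_
    have h := hWpd.posSemidef.dotProduct_mulVec_nonneg (Pi.single i 1)
    simpa [dotProduct, mulVec, Pi.single_apply, mul_ite, ite_mul, Finset.sum_ite_eq] using h
  obtain ⟨R, hR⟩ := hbdd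
  set K : ℝ := ∑ i, ∑ j, |Wstar i j| with hK
  have hK0 : 0 ≤ K := Finset.sum_nonneg fun _ _ => Finset.sum_nonneg fun _ _ => abs_nonneg _
  have hyb : ∀ (x : Fin d → ℝ) i, |Wstar.mulVec x i| ≤ K * enorm' x := by
    intro x i
    calc |Wstar.mulVec x i| = |∑ j, Wstar i j * x j| := by simp [mulVec, dotProduct]
    _ ≤ ∑ j, |Wstar i j * x j| := Finset.abs_sum_le_sum_abs _ _
    _ = ∑ j, |Wstar i j| * |x j| := by simp [abs_mul]
    _ ≤ ∑ j, |Wstar i j| * enorm' x := Finset.sum_le_sum fun j _ =>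
        mul_le_mul_of_nonneg_left (abs_le_enorm' x j) (abs_nonneg _)
    _ = (∑ j, |Wstar i j|) * enorm' x := (Finset.sum_mul _ _ _).symm
    _ ≤ K * enorm' x := mul_le_mul_of_nonneg_right
        (Finset.single_le_sum (f := fun i => ∑ j, |Wstar i j|)
          (fun i _ => Finset.sum_nonneg fun j _ => abs_nonneg _) (Finset.mem_univ i))
        (enorm'_nonneg x)
  have hyC : ∀ᵐ x ∂p, enorm' (Wstar.mulVec x) ≤ Real.sqrt d * (K * max R 0) := by
    filter_upwards [hR] with x hx
    have hx' : enorm' x ≤ max R 0 := le_trans hx (le_max_left _ _)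
    have h1 : ∀ i, (Wstar.mulVec x i)^2 ≤ (K * max R 0)^2 := by
      intro i
      have h2 : |Wstar.mulVec x i| ≤ K * max R 0 :=
        (hyb x i).trans (mul_le_mul_of_nonneg_left hx' hK0)
      have := pow_le_pow_left₀ (abs_nonneg _) h2 2
      rwa [sq_abs] at this
    calc enorm' (Wstar.mulVec x) = Real.sqrt (∑ i, (Wstar.mulVec x i)^2) := rfl
    _ ≤ Real.sqrt (∑ _i : Fin d, (K * max R 0)^2) :=
        Real.sqrt_le_sqrt (Finset.sum_le_sum fun i _ => h1 i)
    _ = Real.sqrt (d * (K * max R 0)^2) := by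
        rw [Finset.sum_const, Finset.card_univ, Fintype.card_fin, nsmul_eq_mul]
    _ = Real.sqrt d * (K * max R 0) := by
        rw [Real.sqrt_mul (Nat.cast_nonneg d), Real.sqrt_sq (by positivity)]
  calc (∫ x, min ((einner' x θ)^2) (α * |einner' x θ|) ∂p)
      = ∫ x, min ((∑ j, Wstar.mulVec x j * u j)^2) (α * |∑ j, Wstar.mulVec x j * u j|) ∂p := by
        simp_rw [ht]
    _ ≤ enorm' u ^ 2 + α * Real.sqrt d * γ * enorm' u :=
        aux9 p (fun x => Wstar.mulVec x)
          (LinearMap.continuous_of_finiteDimensional (Matrix.mulVecLin Wstar))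
          γ lam α hγ hlam hα u Wstar hQ hTr _ hyC hfixe
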